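/- Fix nonempty finite sets Ω and A, a finite message set M with |M| > max{|Ω|, |A|}, and an interior prior μ₀ on Ω. Then there is a generic set of environments such that for every environment (u_S, u_R) in that set: if cheap-talk Sender values randomization, then committed Sender values randomization. -/

import Mathlib

open MeasureTheory

namespace KL

/-- `f` is a probability distribution on the finite type `X`. -/
def IsDist {X : Type} [Fintype X] (f : X → ℝ) : Prop :=
  (∀ x, 0 ≤ f x) ∧ ∑ x, f x = 1

/-- `μ₀` is an interior prior on `Ω`. -/
def IsPrior {Ω : Type} [Fintype Ω] (μ₀ : Ω → ℝ) : Prop :=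
  (∀ ω, 0 < μ₀ ω) ∧ ∑ ω, μ₀ ω = 1

variable {Ω A M : Type} [Fintype Ω] [Fintype A] [Fintype M]

/-- A messaging strategy: a distribution over messages in each state. -/
def IsMsg (σ : Ω → M → ℝ) : Prop := ∀ ω, IsDist (σ ω)

/-- An action strategy: a distribution over actions after each message. -/
def IsAct (ρ : M → A → ℝ) : Prop := ∀ m, IsDist (ρ m)

/-- Expected payoff of a profile `(σ, ρ)` for utility `u`. -/
def U (μ₀ : Ω → ℝ) (u : A × Ω → ℝ) (σ : Ω → M → ℝ) (ρ : M → A → ℝ) : ℝ :=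
  ∑ ω, ∑ m, ∑ a, μ₀ ω * σ ω m * ρ m a * u (a, ω)

/-- Sender best response. -/
def SBR (μ₀ : Ω → ℝ) (uS : A × Ω → ℝ) (σ : Ω → M → ℝ) (ρ : M → A → ℝ) : Prop :=
  ∀ σ' : Ω → M → ℝ, IsMsg σ' → U μ₀ uS σ' ρ ≤ U μ₀ uS σ ρ

/-- Receiver best response. -/
def RBR (μ₀ : Ω → ℝ) (uR : A × Ω → ℝ) (σ : Ω → M → ℝ) (ρ : M → A → ℝ) : Prop :=
  ∀ ρ' : M → A → ℝ, IsAct ρ' → U μ₀ uR σ ρ' ≤ U μ₀ uR σ ρ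

/-- A cheap-talk equilibrium: a profile of valid strategies that is S-BR and R-BR. -/
def CTEq (μ₀ : Ω → ℝ) (uS uR : A × Ω → ℝ) (σ : Ω → M → ℝ) (ρ : M → A → ℝ) : Prop :=
  IsMsg σ ∧ IsAct ρ ∧ SBR μ₀ uS σ ρ ∧ RBR μ₀ uR σ ρ

/-- A persuasion profile: a profile of valid strategies that is R-BR. -/
def PersProfile (μ₀ : Ω → ℝ) (uR : A × Ω → ℝ) (σ : Ω → M → ℝ) (ρ : M → A → ℝ) : Prop :=
  IsMsg σ ∧ IsAct ρ ∧ RBR μ₀ uR σ ρ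

/-- The cheap-talk payoff: the maximal Sender payoff over cheap-talk equilibria. -/
noncomputable def ctPayoff (μ₀ : Ω → ℝ) (uS uR : A × Ω → ℝ) : ℝ :=
  sSup {x | ∃ (σ : Ω → M → ℝ) (ρ : M → A → ℝ), CTEq μ₀ uS uR σ ρ ∧ x = U μ₀ uS σ ρ}

/-- The (Bayesian) persuasion payoff: the maximal Sender payoff over persuasion profiles. -/
noncomputable def persPayoff (μ₀ : Ω → ℝ) (uS uR : A × Ω → ℝ) : ℝ :=
  sSup {x | ∃ (σ : Ω → M → ℝ) (ρ : M → A → ℝ), PersProfile μ₀ uR σ ρ ∧ x = U μ₀ uS σ ρ}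

/-- A messaging strategy is partitional if it is deterministic in every state. -/
def Partitional (σ : Ω → M → ℝ) : Prop := ∀ ω, ∃ m, σ ω m = 1

/-- The partitional persuasion payoff. -/
noncomputable def partPersPayoff (μ₀ : Ω → ℝ) (uS uR : A × Ω → ℝ) : ℝ :=
  sSup {x | ∃ (σ : Ω → M → ℝ) (ρ : M → A → ℝ),
    Partitional σ ∧ PersProfile μ₀ uR σ ρ ∧ x = U μ₀ uS σ ρ}

/-- The partitional cheap-talk payoff. -/
noncomputable def partCtPayoff (μ₀ : Ω → ℝ) (uS uR : A × Ω → ℝ) : ℝ :=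
  sSup {x | ∃ (σ : Ω → M → ℝ) (ρ : M → A → ℝ),
    Partitional σ ∧ CTEq μ₀ uS uR σ ρ ∧ x = U μ₀ uS σ ρ}

/-- A message is on-path if it is sent with positive probability in some state. -/
def OnPath (σ : Ω → M → ℝ) (m : M) : Prop := ∃ ω, 0 < σ ω m

/-- A pure action strategy: degenerate after every message. -/
def IsPureAct (ρ : M → A → ℝ) : Prop := ∀ m, ∃ a, ρ m a = 1

/-- A pure-on-path action strategy: degenerate after every on-path message. -/
def PureOnPath (σ : Ω → M → ℝ) (ρ : M → A → ℝ) : Prop :=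
  ∀ m, OnPath σ m → ∃ a, ρ m a = 1

/-- The posterior belief induced by message `m`. -/
noncomputable def post (μ₀ : Ω → ℝ) (σ : Ω → M → ℝ) (m : M) (ω : Ω) : ℝ :=
  μ₀ ω * σ ω m / ∑ ω', μ₀ ω' * σ ω' m

/-- The cube of environments `[0,1]^(2|A||Ω|)`. -/
def EnvCube (Ω A : Type) : Set ((A × Ω → ℝ) × (A × Ω → ℝ)) :=
  {e | (∀ p, e.1 p ∈ Set.Icc (0 : ℝ) 1) ∧ ∀ p, e.2 p ∈ Set.Icc (0 : ℝ) 1}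

/-- The cube of transparent environments `[0,1]^(|A|(|Ω|+1))`, points `(v, u_R)`. -/
def TransCube (Ω A : Type) : Set ((A → ℝ) × (A × Ω → ℝ)) :=
  {e | (∀ a, e.1 a ∈ Set.Icc (0 : ℝ) 1) ∧ ∀ p, e.2 p ∈ Set.Icc (0 : ℝ) 1}

open Classical in
/-- The expanded-indifference matrix `T^i`: rows `u_S(a_j,·) − u_S(a_i,·)` for `j ≠ i`,
rows `u_R(a_j,·) − u_R(a_i,·)` for `j ≠ i`, and the rows of the identity matrix. -/
noncomputable def TMat (uS uR : A × Ω → ℝ) (i : A) :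
    Matrix (({j : A // j ≠ i} ⊕ {j : A // j ≠ i}) ⊕ Ω) Ω ℝ :=
  Matrix.of fun r ω =>
    match r with
    | Sum.inl (Sum.inl j) => uS (j.1, ω) - uS (i, ω)
    | Sum.inl (Sum.inr j) => uR (j.1, ω) - uR (i, ω)
    | Sum.inr ω' => if ω' = ω then 1 else 0

/-- Scant indifferences: every row-submatrix of every expanded-indifference matrix has
full rank (rank equal to the minimum of the number of rows and the number of columns). -/
def ScantIndiff (uS uR : A × Ω → ℝ) : Prop :=
  ∀ i : A, ∀ s : Finset (({j : A // j ≠ i} ⊕ {j : A // j ≠ i}) ⊕ Ω),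
    ((TMat uS uR i).submatrix (fun r : {x // x ∈ s} => r.1) id).rank
      = min s.card (Fintype.card Ω)

open Classical in
/-- The set `Ω_a` of states in which `a` is an ideal action for Sender. -/
noncomputable def idealStates (uS : A × Ω → ℝ) (a : A) : Finset Ω :=
  Finset.univ.filter fun ω => ∀ b, uS (b, ω) ≤ uS (a, ω)

/-- Felicitous environment. -/
def Felicitous (μ₀ : Ω → ℝ) (uS uR : A × Ω → ℝ) : Prop :=
  ∀ a a' : A, 0 ≤ ∑ ω ∈ idealStates uS a, μ₀ ω * (uR (a, ω) - uR (a', ω))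

/-- Partitional-unique-response: for every nonempty subset of states, Receiver's
expected payoff has a unique maximizer. -/
def PUR (μ₀ : Ω → ℝ) (uR : A × Ω → ℝ) : Prop :=
  ∀ S : Finset Ω, S.Nonempty →
    ∃! a : A, ∀ b : A, ∑ ω ∈ S, μ₀ ω * uR (b, ω) ≤ ∑ ω ∈ S, μ₀ ω * uR (a, ω)

/-- Jointly-inclusive environment: each action is the unique ideal action of both
players in some state. -/
def JointlyInclusive (uS uR : A × Ω → ℝ) : Prop :=
  ∀ a : A, ∃ ω : Ω,
    (∀ b, b ≠ a → uS (b, ω) < uS (a, ω)) ∧ ∀ b, b ≠ a → uR (b, ω) < uR (a, ω)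


section AuxProof

variable {Ω A M : Type} [Fintype Ω] [Fintype A] [Fintype M]

/-- Receiver's (unnormalized) expected payoff from action `a` after message `m`. -/
def gaux (μ₀ : Ω → ℝ) (u : A × Ω → ℝ) (σ : Ω → M → ℝ) (m : M) (a : A) : ℝ :=
  ∑ ω, μ₀ ω * σ ω m * u (a, ω)

lemma U_eq_g (μ₀ : Ω → ℝ) (u : A × Ω → ℝ) (σ : Ω → M → ℝ) (ρ : M → A → ℝ) :
    U μ₀ u σ ρ = ∑ m, ∑ a, ρ m a * gaux μ₀ u σ m a := by
  unfold U gaux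
  rw [Finset.sum_comm]
  refine Finset.sum_congr rfl fun m _ => ?_
  rw [Finset.sum_comm]
  refine Finset.sum_congr rfl fun a _ => ?_
  rw [Finset.mul_sum]
  exact Finset.sum_congr rfl fun ω _ => by ring

lemma dist_point {X : Type} [Fintype X] {p : X → ℝ} (hp : IsDist p) {x0 : X}
    (h1 : p x0 = 1) : ∀ x, x ≠ x0 → p x = 0 := by
  classical
  intro x hx
  have hsum : ∑ y ∈ Finset.univ.erase x0, p y = 0 := by
    have h2 := hp.2
    rw [← Finset.add_sum_erase Finset.univ p (Finset.mem_univ x0), h1] at h2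
    linarith
  exact (Finset.sum_eq_zero_iff_of_nonneg (fun y _ => hp.1 y)).mp hsum x
    (Finset.mem_erase.mpr ⟨hx, Finset.mem_univ x⟩)

lemma U_rho_point (μ₀ : Ω → ℝ) (u : A × Ω → ℝ) (σ : Ω → M → ℝ) (ρ : M → A → ℝ)
    (B : M → A) (h1 : ∀ m, ρ m (B m) = 1) (h0 : ∀ m a, a ≠ B m → ρ m a = 0) :
    U μ₀ u σ ρ = ∑ ω, ∑ m, μ₀ ω * σ ω m * u (B m, ω) := by
  unfold U
  refine Finset.sum_congr rfl fun ω _ => Finset.sum_congr rfl fun m _ => ?_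
  rw [Finset.sum_eq_single (B m)]
  · rw [h1 m, mul_one]
  · intro b _ hb; rw [h0 m b hb, mul_zero, zero_mul]
  · intro h; exact absurd (Finset.mem_univ _) h

lemma U_sigma_point (μ₀ : Ω → ℝ) (u : A × Ω → ℝ) (σ : Ω → M → ℝ) (ρ : M → A → ℝ)
    (f : Ω → M) (h1 : ∀ ω, σ ω (f ω) = 1) (h0 : ∀ ω m, m ≠ f ω → σ ω m = 0) :
    U μ₀ u σ ρ = ∑ ω, ∑ a, μ₀ ω * ρ (f ω) a * u (a, ω) := by
  unfold U
  refine Finset.sum_congr rfl fun ω _ => ?_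
  rw [Finset.sum_eq_single (f ω)]
  · exact Finset.sum_congr rfl fun a _ => by rw [h1 ω]; ring
  · intro m _ hm
    exact Finset.sum_eq_zero fun a _ => by rw [h0 ω m hm]; ring
  · intro h; exact absurd (Finset.mem_univ _) h

lemma U_point_point (μ₀ : Ω → ℝ) (u : A × Ω → ℝ) (σ : Ω → M → ℝ) (ρ : M → A → ℝ)
    (f : Ω → M) (B : M → A)
    (hσ1 : ∀ ω, σ ω (f ω) = 1) (hσ0 : ∀ ω m, m ≠ f ω → σ ω m = 0)
    (hρ1 : ∀ m, ρ m (B m) = 1) (hρ0 : ∀ m a, a ≠ B m → ρ m a = 0) :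
    U μ₀ u σ ρ = ∑ ω, μ₀ ω * u (B (f ω), ω) := by
  rw [U_sigma_point μ₀ u σ ρ f hσ1 hσ0]
  refine Finset.sum_congr rfl fun ω _ => ?_
  rw [Finset.sum_eq_single (B (f ω))]
  · rw [hρ1 (f ω)]; ring
  · intro a _ ha; rw [hρ0 (f ω) a ha]; ring
  · intro h; exact absurd (Finset.mem_univ _) h

lemma gaux_point (μ₀ : Ω → ℝ) (u : A × Ω → ℝ) (σ : Ω → M → ℝ) (f : Ω → M)
    (hσ1 : ∀ ω, σ ω (f ω) = 1) (hσ0 : ∀ ω m, m ≠ f ω → σ ω m = 0)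
    (m : M) (S : Finset Ω) (hS : ∀ ω, ω ∈ S ↔ f ω = m) (a : A) :
    gaux μ₀ u σ m a = ∑ ω ∈ S, μ₀ ω * u (a, ω) := by
  unfold gaux
  have h1 : ∑ ω, μ₀ ω * σ ω m * u (a, ω) = ∑ ω ∈ S, μ₀ ω * σ ω m * u (a, ω) := by
    refine (Finset.sum_subset (Finset.subset_univ S) (fun ω _ hω => ?_)).symm
    have hzero : σ ω m = 0 := hσ0 ω m (fun h => hω ((hS ω).mpr h.symm))
    rw [hzero]; ring
  rw [h1]
  refine Finset.sum_congr rfl fun ω hω => ?_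
  have hf : f ω = m := (hS ω).mp hω
  rw [← hf, hσ1 ω]; ring

lemma RBR_of_pointwise (μ₀ : Ω → ℝ) (uR : A × Ω → ℝ) (σ : Ω → M → ℝ) (ρ : M → A → ℝ)
    (B : M → A) (hρ1 : ∀ m, ρ m (B m) = 1) (hρ0 : ∀ m a, a ≠ B m → ρ m a = 0)
    (hmax : ∀ m a, gaux μ₀ uR σ m a ≤ gaux μ₀ uR σ m (B m)) :
    RBR μ₀ uR σ ρ := by
  intro ρ' hρ'
  rw [U_eq_g, U_eq_g]
  refine Finset.sum_le_sum fun m _ => ?_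
  have hR : ∑ a, ρ m a * gaux μ₀ uR σ m a = gaux μ₀ uR σ m (B m) := by
    rw [Finset.sum_eq_single (B m)]
    · rw [hρ1 m, one_mul]
    · intro b _ hb; rw [hρ0 m b hb, zero_mul]
    · intro h; exact absurd (Finset.mem_univ _) h
  rw [hR]
  calc ∑ a, ρ' m a * gaux μ₀ uR σ m a
      ≤ ∑ a, ρ' m a * gaux μ₀ uR σ m (B m) :=
        Finset.sum_le_sum fun a _ => mul_le_mul_of_nonneg_left (hmax m a) ((hρ' m).1 a)
    _ = gaux μ₀ uR σ m (B m) := by rw [← Finset.sum_mul, (hρ' m).2, one_mul]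

lemma pin_of_RBR (μ₀ : Ω → ℝ) (uR : A × Ω → ℝ) (σ : Ω → M → ℝ) (ρ : M → A → ℝ)
    (hρ : IsAct ρ) (hRBR : RBR μ₀ uR σ ρ) (m : M) (astar : A)
    (hstrict : ∀ a, a ≠ astar → gaux μ₀ uR σ m a < gaux μ₀ uR σ m astar) :
    ρ m astar = 1 ∧ ∀ a, a ≠ astar → ρ m a = 0 := by
  classical
  let ρ' : M → A → ℝ := fun m' a => if m' = m then (if a = astar then 1 else 0) else ρ m' a
  have hρ' : IsAct ρ' := by
    intro m'
    by_cases h : m' = m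
    · subst h
      constructor
      · intro a; simp only [ρ', if_pos rfl]; split <;> norm_num
      · simp [ρ']
    · constructor
      · intro a; simp only [ρ', if_neg h]; exact (hρ m').1 a
      · simp only [ρ', if_neg h]; exact (hρ m').2
  have hU := hRBR ρ' hρ'
  rw [U_eq_g, U_eq_g] at hU
  have hsplit : ∀ τ : M → A → ℝ,
      ∑ m', ∑ a, τ m' a * gaux μ₀ uR σ m' a
        = (∑ a, τ m a * gaux μ₀ uR σ m a)
          + ∑ m' ∈ Finset.univ.erase m, ∑ a, τ m' a * gaux μ₀ uR σ m' a :=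
    fun τ => (Finset.add_sum_erase Finset.univ _ (Finset.mem_univ m)).symm
  rw [hsplit ρ', hsplit ρ] at hU
  have herase : ∑ m' ∈ Finset.univ.erase m, ∑ a, ρ' m' a * gaux μ₀ uR σ m' a
      = ∑ m' ∈ Finset.univ.erase m, ∑ a, ρ m' a * gaux μ₀ uR σ m' a := by
    refine Finset.sum_congr rfl fun m' hm' => ?_
    have hne : m' ≠ m := (Finset.mem_erase.mp hm').1
    exact Finset.sum_congr rfl fun a _ => by simp [ρ', hne]
  rw [herase] at hU
  have hU2 : ∑ a, ρ' m a * gaux μ₀ uR σ m a ≤ ∑ a, ρ m a * gaux μ₀ uR σ m a := by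
    linarith
  have hρ'm : ∑ a, ρ' m a * gaux μ₀ uR σ m a = gaux μ₀ uR σ m astar := by
    simp only [ρ', if_pos rfl]
    rw [Finset.sum_eq_single astar]
    · rw [if_pos rfl, one_mul]
    · intro b _ hb; rw [if_neg hb, zero_mul]
    · intro h; exact absurd (Finset.mem_univ _) h
  rw [hρ'm] at hU2
  have hle : ∀ a, gaux μ₀ uR σ m a ≤ gaux μ₀ uR σ m astar := by
    intro a
    by_cases h : a = astar
    · rw [h]
    · exact le_of_lt (hstrict a h)
  have hup : ∑ a, ρ m a * gaux μ₀ uR σ m a ≤ gaux μ₀ uR σ m astar := by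
    calc ∑ a, ρ m a * gaux μ₀ uR σ m a ≤ ∑ a, ρ m a * gaux μ₀ uR σ m astar :=
          Finset.sum_le_sum fun a _ => mul_le_mul_of_nonneg_left (hle a) ((hρ m).1 a)
      _ = gaux μ₀ uR σ m astar := by rw [← Finset.sum_mul, (hρ m).2, one_mul]
  have heq : ∑ a, ρ m a * gaux μ₀ uR σ m a = gaux μ₀ uR σ m astar := le_antisymm hup hU2
  have hzero : ∑ a, ρ m a * (gaux μ₀ uR σ m astar - gaux μ₀ uR σ m a) = 0 := by
    have hsub : ∑ a, ρ m a * (gaux μ₀ uR σ m astar - gaux μ₀ uR σ m a)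
        = (∑ a, ρ m a * gaux μ₀ uR σ m astar) - ∑ a, ρ m a * gaux μ₀ uR σ m a := by
      rw [← Finset.sum_sub_distrib]
      exact Finset.sum_congr rfl fun a _ => by ring
    rw [hsub, ← Finset.sum_mul, (hρ m).2, one_mul, heq, sub_self]
  have hterm := (Finset.sum_eq_zero_iff_of_nonneg
    (fun a _ => mul_nonneg ((hρ m).1 a) (sub_nonneg.mpr (hle a)))).mp hzero
  have h0 : ∀ a, a ≠ astar → ρ m a = 0 := by
    intro a ha
    by_contra hne
    have hpos : 0 < ρ m a * (gaux μ₀ uR σ m astar - gaux μ₀ uR σ m a) :=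
      mul_pos (lt_of_le_of_ne ((hρ m).1 a) (Ne.symm hne)) (sub_pos.mpr (hstrict a ha))
    have := hterm a (Finset.mem_univ a)
    linarith
  have h1 : ρ m astar = 1 := by
    have hs := (hρ m).2
    rw [Finset.sum_eq_single astar (fun b _ hb => h0 b hb)
      (fun h => absurd (Finset.mem_univ _) h)] at hs
    exact hs
  exact ⟨h1, h0⟩

lemma U_le_one (μ₀ : Ω → ℝ) (hμ : IsPrior μ₀) (u : A × Ω → ℝ)
    (hu0 : ∀ p, 0 ≤ u p) (hu1 : ∀ p, u p ≤ 1)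
    (σ : Ω → M → ℝ) (ρ : M → A → ℝ) (hσ : IsMsg σ) (hρ : IsAct ρ) :
    U μ₀ u σ ρ ≤ 1 := by
  have hnest : U μ₀ u σ ρ = ∑ ω, μ₀ ω * ∑ m, σ ω m * ∑ a, ρ m a * u (a, ω) := by
    unfold U
    simp_rw [Finset.mul_sum]
    exact Finset.sum_congr rfl fun ω _ => Finset.sum_congr rfl fun m _ =>
      Finset.sum_congr rfl fun a _ => by ring
  rw [hnest]
  calc ∑ ω, μ₀ ω * ∑ m, σ ω m * ∑ a, ρ m a * u (a, ω)
      ≤ ∑ ω, μ₀ ω * 1 := by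
        refine Finset.sum_le_sum fun ω _ => ?_
        refine mul_le_mul_of_nonneg_left ?_ (le_of_lt (hμ.1 ω))
        calc ∑ m, σ ω m * ∑ a, ρ m a * u (a, ω)
            ≤ ∑ m, σ ω m * 1 := by
              refine Finset.sum_le_sum fun m _ => ?_
              refine mul_le_mul_of_nonneg_left ?_ ((hσ ω).1 m)
              calc ∑ a, ρ m a * u (a, ω) ≤ ∑ a, ρ m a * 1 :=
                    Finset.sum_le_sum fun a _ =>
                      mul_le_mul_of_nonneg_left (hu1 _) ((hρ m).1 a)
                _ = 1 := by simp only [mul_one]; exact (hρ m).2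
          _ = 1 := by simp only [mul_one]; exact (hσ ω).2
    _ = 1 := by simp only [mul_one]; exact hμ.2

end AuxProof


/-- Key lemma: under PUR, if the cheap-talk Sender values randomization then the
committed Sender values randomization. -/
lemma key_PUR {Ω A M : Type} [Fintype Ω] [Fintype A] [Fintype M]
    [Nonempty Ω] [Nonempty A] [Nonempty M]
    (μ₀ : Ω → ℝ) (hμ : IsPrior μ₀) (uS uR : A × Ω → ℝ)
    (hS0 : ∀ p, 0 ≤ uS p) (hS1 : ∀ p, uS p ≤ 1)
    (hR0 : ∀ p, 0 ≤ uR p) (hR1 : ∀ p, uR p ≤ 1)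
    (hPUR : PUR μ₀ uR)
    (hct : partCtPayoff (M := M) μ₀ uS uR < ctPayoff (M := M) μ₀ uS uR) :
    partPersPayoff (M := M) μ₀ uS uR < persPayoff (M := M) μ₀ uS uR := by
  classical
  -- names for the four payoff sets
  set PS := {x | ∃ (σ : Ω → M → ℝ) (ρ : M → A → ℝ),
    PersProfile μ₀ uR σ ρ ∧ x = U μ₀ uS σ ρ} with hPSdef
  set PP := {x | ∃ (σ : Ω → M → ℝ) (ρ : M → A → ℝ),
    Partitional σ ∧ PersProfile μ₀ uR σ ρ ∧ x = U μ₀ uS σ ρ} with hPPdef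
  set CTS := {x | ∃ (σ : Ω → M → ℝ) (ρ : M → A → ℝ),
    CTEq μ₀ uS uR σ ρ ∧ x = U μ₀ uS σ ρ} with hCTdef
  set PC := {x | ∃ (σ : Ω → M → ℝ) (ρ : M → A → ℝ),
    Partitional σ ∧ CTEq μ₀ uS uR σ ρ ∧ x = U μ₀ uS σ ρ} with hPCdef
  have hPS : persPayoff (M := M) μ₀ uS uR = sSup PS := rfl
  have hPP : partPersPayoff (M := M) μ₀ uS uR = sSup PP := rfl
  have hCT : ctPayoff (M := M) μ₀ uS uR = sSup CTS := rfl
  have hPC : partCtPayoff (M := M) μ₀ uS uR = sSup PC := rfl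
  have hbddPS : BddAbove PS := by
    refine ⟨1, ?_⟩
    rintro x ⟨σ, ρ, ⟨hσ, hρ, -⟩, rfl⟩
    exact U_le_one μ₀ hμ uS hS0 hS1 σ ρ hσ hρ
  have hsubPP : PP ⊆ PS := by
    rintro x ⟨σ, ρ, -, hp, hx⟩; exact ⟨σ, ρ, hp, hx⟩
  have hsubCT : CTS ⊆ PS := by
    rintro x ⟨σ, ρ, ⟨h1, h2, -, h4⟩, hx⟩; exact ⟨σ, ρ, ⟨h1, h2, h4⟩, hx⟩
  have hsubPC : PC ⊆ PS := by
    rintro x ⟨σ, ρ, -, ⟨h1, h2, -, h4⟩, hx⟩; exact ⟨σ, ρ, ⟨h1, h2, h4⟩, hx⟩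
  -- cells of a partition
  let cellOf : (Ω → M) → M → Finset Ω := fun f m => Finset.univ.filter (fun ω => f ω = m)
  have hmem_cell : ∀ (f : Ω → M) (ω : Ω), ω ∈ cellOf f (f ω) :=
    fun f ω => Finset.mem_filter.mpr ⟨Finset.mem_univ ω, rfl⟩
  have hcell_iff : ∀ (f : Ω → M) (m : M) (ω : Ω), ω ∈ cellOf f m ↔ f ω = m := by
    intro f m ω
    simp [cellOf]
  -- receiver's unique optimal action on a set of states
  let act : Finset Ω → A := fun S =>
    if h : S.Nonempty then (hPUR S h).choose else Classical.arbitrary A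
  have act_max : ∀ (S : Finset Ω), S.Nonempty →
      ∀ b, ∑ ω ∈ S, μ₀ ω * uR (b, ω) ≤ ∑ ω ∈ S, μ₀ ω * uR (act S, ω) := by
    intro S h b
    have hact : act S = (hPUR S h).choose := dif_pos h
    rw [hact]
    exact (hPUR S h).choose_spec.1 b
  have act_strict : ∀ (S : Finset Ω), S.Nonempty → ∀ b, b ≠ act S →
      ∑ ω ∈ S, μ₀ ω * uR (b, ω) < ∑ ω ∈ S, μ₀ ω * uR (act S, ω) := by
    intro S h b hb
    rcases lt_or_eq_of_le (act_max S h b) with hlt | heq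
    · exact hlt
    · exfalso
      apply hb
      have hbP : ∀ c, ∑ ω ∈ S, μ₀ ω * uR (c, ω) ≤ ∑ ω ∈ S, μ₀ ω * uR (b, ω) :=
        fun c => heq ▸ act_max S h c
      have hact : act S = (hPUR S h).choose := dif_pos h
      rw [hact]
      exact (hPUR S h).choose_spec.2 b hbP
  -- the optimal partition
  let va : (Ω → M) → ℝ := fun f => ∑ ω, μ₀ ω * uS (act (cellOf f (f ω)), ω)
  obtain ⟨fstar, -, hfstar⟩ := Finset.exists_max_image Finset.univ va
    ⟨Classical.arbitrary (Ω → M), Finset.mem_univ _⟩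
  -- the partitional profile induced by `fstar`
  let σstar : Ω → M → ℝ := fun ω m => if fstar ω = m then 1 else 0
  have hσ1 : ∀ ω, σstar ω (fstar ω) = 1 := fun ω => if_pos rfl
  have hσ0 : ∀ ω m, m ≠ fstar ω → σstar ω m = 0 :=
    fun ω m h => if_neg (fun hh => h hh.symm)
  let ω₀ : Ω := Classical.arbitrary Ω
  let B : M → A := fun m =>
    if (cellOf fstar m).Nonempty then act (cellOf fstar m) else act (cellOf fstar (fstar ω₀))
  have hBf : ∀ ω, B (fstar ω) = act (cellOf fstar (fstar ω)) :=
    fun ω => if_pos ⟨ω, hmem_cell fstar ω⟩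
  let ρstar : M → A → ℝ := fun m a => if a = B m then 1 else 0
  have hρ1 : ∀ m, ρstar m (B m) = 1 := fun m => if_pos rfl
  have hρ0 : ∀ m a, a ≠ B m → ρstar m a = 0 := fun m a h => if_neg h
  have hσstar : IsMsg σstar := by
    intro ω
    constructor
    · intro m
      by_cases h : fstar ω = m
      · rw [show σstar ω m = 1 from if_pos h]; norm_num
      · rw [show σstar ω m = 0 from if_neg h]
    · rw [Finset.sum_eq_single (fstar ω) (fun m _ hm => hσ0 ω m hm)
        (fun h => absurd (Finset.mem_univ _) h)]
      exact hσ1 ω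
  have hρstar : IsAct ρstar := by
    intro m
    constructor
    · intro a
      by_cases h : a = B m
      · rw [show ρstar m a = 1 from if_pos h]; norm_num
      · rw [hρ0 m a h]
    · rw [Finset.sum_eq_single (B m) (fun a _ ha => hρ0 m a ha)
        (fun h => absurd (Finset.mem_univ _) h)]
      exact hρ1 m
  have hPartstar : Partitional σstar := fun ω => ⟨fstar ω, hσ1 ω⟩
  -- the receiver payoffs under σstar
  have hgp : ∀ m a, gaux μ₀ uR σstar m a = ∑ ω ∈ cellOf fstar m, μ₀ ω * uR (a, ω) :=
    fun m a => gaux_point μ₀ uR σstar fstar hσ1 hσ0 m (cellOf fstar m)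
      (fun ω => hcell_iff fstar m ω) a
  have hmaxstar : ∀ m a, gaux μ₀ uR σstar m a ≤ gaux μ₀ uR σstar m (B m) := by
    intro m a
    by_cases h : (cellOf fstar m).Nonempty
    · have hBm : B m = act (cellOf fstar m) := if_pos h
      rw [hgp m a, hgp m (B m), hBm]
      exact act_max _ h a
    · have h0 : ∀ b, gaux μ₀ uR σstar m b = 0 := by
        intro b
        rw [hgp m b, Finset.not_nonempty_iff_eq_empty.mp h, Finset.sum_empty]
      rw [h0 a, h0 (B m)]
  have hRBRstar : RBR μ₀ uR σstar ρstar :=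
    RBR_of_pointwise μ₀ uR σstar ρstar B hρ1 hρ0 hmaxstar
  -- the value of (σstar, ρstar)
  set W : ℝ := U μ₀ uS σstar ρstar with hWdef
  have hW : W = va fstar := by
    rw [hWdef, U_point_point μ₀ uS σstar ρstar fstar B hσ1 hσ0 hρ1 hρ0]
    exact Finset.sum_congr rfl fun ω _ => by rw [hBf ω]
  have hWpp : W ∈ PP := ⟨σstar, ρstar, hPartstar, ⟨hσstar, hρstar, hRBRstar⟩, rfl⟩
  -- partitional persuasion payoff is at most `va fstar = W`
  have hPPleW : sSup PP ≤ W := by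
    refine csSup_le ⟨W, hWpp⟩ ?_
    rintro x ⟨σ, ρ, hpart, ⟨hσ, hρ, hRBR⟩, rfl⟩
    let f : Ω → M := fun ω => (hpart ω).choose
    have hf1 : ∀ ω, σ ω (f ω) = 1 := fun ω => (hpart ω).choose_spec
    have hf0 : ∀ ω m, m ≠ f ω → σ ω m = 0 := fun ω m hm => dist_point (hσ ω) (hf1 ω) m hm
    have hgpf : ∀ m a, gaux μ₀ uR σ m a = ∑ ω ∈ cellOf f m, μ₀ ω * uR (a, ω) :=
      fun m a => gaux_point μ₀ uR σ f hf1 hf0 m (cellOf f m) (fun ω => hcell_iff f m ω) a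
    have hpin : ∀ ω : Ω, ρ (f ω) (act (cellOf f (f ω))) = 1
        ∧ ∀ a, a ≠ act (cellOf f (f ω)) → ρ (f ω) a = 0 := by
      intro ω
      have hne : (cellOf f (f ω)).Nonempty := ⟨ω, hmem_cell f ω⟩
      refine pin_of_RBR μ₀ uR σ ρ hρ hRBR (f ω) (act (cellOf f (f ω))) ?_
      intro a ha
      rw [hgpf, hgpf]
      exact act_strict _ hne a ha
    rw [U_sigma_point μ₀ uS σ ρ f hf1 hf0]
    have hrow : ∀ ω : Ω, ∑ a, μ₀ ω * ρ (f ω) a * uS (a, ω)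
        = μ₀ ω * uS (act (cellOf f (f ω)), ω) := by
      intro ω
      rw [Finset.sum_eq_single (act (cellOf f (f ω)))]
      · rw [(hpin ω).1]; ring
      · intro b _ hb; rw [(hpin ω).2 b hb]; ring
      · intro h; exact absurd (Finset.mem_univ _) h
    rw [Finset.sum_congr rfl (fun ω _ => hrow ω)]
    calc ∑ ω, μ₀ ω * uS (act (cellOf f (f ω)), ω) = va f := rfl
      _ ≤ va fstar := hfstar f (Finset.mem_univ f)
      _ = W := hW.symm
  -- suppose the committed Sender did not value randomization
  by_contra hnot
  have hle_pp_ps : sSup PP ≤ sSup PS := csSup_le_csSup hbddPS ⟨W, hWpp⟩ hsubPP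
  have hEq : sSup PS = sSup PP := by
    rw [hPS, hPP] at hnot
    exact le_antisymm (not_lt.mp hnot) hle_pp_ps
  -- obedience at the optimal partition
  have hOb' : ∀ (m : M), (cellOf fstar m).Nonempty →
      ∀ ωb : Ω, uS (B m, ωb) ≤ uS (B (fstar ωb), ωb) := by
    intro m hm ωb
    by_contra hlt'
    push_neg at hlt'
    have hmne : m ≠ fstar ωb := by
      intro h; rw [h] at hlt'; exact lt_irrefl _ hlt'
    have hcellω : (cellOf fstar (fstar ωb)).Nonempty := ⟨ωb, hmem_cell fstar ωb⟩
    -- minimal receiver gap at the two perturbed messages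
    let T : Finset (M × A) :=
      (({m, fstar ωb} : Finset M) ×ˢ Finset.univ).filter (fun p => p.2 ≠ B p.1)
    let gapf : M × A → ℝ := fun p =>
      gaux μ₀ uR σstar p.1 (B p.1) - gaux μ₀ uR σstar p.1 p.2
    have hcellT : ∀ p ∈ T, (cellOf fstar p.1).Nonempty := by
      rintro ⟨m', a⟩ hp
      obtain ⟨hp1, -⟩ := Finset.mem_filter.mp hp
      have hm' : m' ∈ ({m, fstar ωb} : Finset M) := (Finset.mem_product.mp hp1).1
      rcases Finset.mem_insert.mp hm' with h | h
      · rw [h]; exact hm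
      · rw [Finset.mem_singleton.mp h]; exact hcellω
    have hgappos : ∀ p ∈ T, 0 < gapf p := by
      rintro ⟨m', a⟩ hp
      have hm'ne : (cellOf fstar m').Nonempty := hcellT _ hp
      have hBm' : B m' = act (cellOf fstar m') := if_pos hm'ne
      have ha : a ≠ B m' := (Finset.mem_filter.mp hp).2
      have hstr := act_strict (cellOf fstar m') hm'ne a (by rw [← hBm']; exact ha)
      have : gapf (m', a) = gaux μ₀ uR σstar m' (B m') - gaux μ₀ uR σstar m' a := rfl
      rw [this, hgp m' a, hgp m' (B m'), hBm']
      linarith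
    let γ : ℝ := if hT : T.Nonempty then T.inf' hT gapf else 1
    have hγpos : 0 < γ := by
      by_cases hT : T.Nonempty
      · have : γ = T.inf' hT gapf := dif_pos hT
        rw [this]
        exact (Finset.lt_inf'_iff hT).mpr (fun p hp => hgappos p hp)
      · have : γ = 1 := dif_neg hT
        rw [this]; norm_num
    have hγle : ∀ p ∈ T, γ ≤ gapf p := by
      intro p hp
      have hT : T.Nonempty := ⟨p, hp⟩
      have : γ = T.inf' hT gapf := dif_pos hT
      rw [this]
      exact Finset.inf'_le gapf hp
    -- the perturbation size
    have hμω : 0 < μ₀ ωb := hμ.1 ωb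
    set ε : ℝ := min 1 (γ / (μ₀ ωb + 1)) with hεdef
    have hεpos : 0 < ε := lt_min one_pos (div_pos hγpos (by linarith))
    have hεle1 : ε ≤ 1 := min_le_left _ _
    have hεsmall : μ₀ ωb * ε < γ := by
      have h1 : μ₀ ωb * ε ≤ μ₀ ωb * (γ / (μ₀ ωb + 1)) :=
        mul_le_mul_of_nonneg_left (min_le_right _ _) (le_of_lt hμω)
      have h2 : μ₀ ωb * (γ / (μ₀ ωb + 1)) < γ := by
        rw [mul_comm, div_mul_eq_mul_div, div_lt_iff₀ (by linarith : (0:ℝ) < μ₀ ωb + 1)]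
        nlinarith
      linarith
    -- the perturbed messaging strategy
    let σε : Ω → M → ℝ := fun ω m' =>
      if ω = ωb then (if m' = m then ε else if m' = fstar ωb then 1 - ε else 0)
      else σstar ω m'
    have hσε_row : ∀ m', σε ωb m'
        = if m' = m then ε else if m' = fstar ωb then 1 - ε else 0 := fun m' => if_pos rfl
    have hσε_other : ∀ ω, ω ≠ ωb → σε ω = σstar ω := fun ω h => funext fun m' => if_neg h
    have hσε : IsMsg σε := by
      intro ω
      by_cases h : ω = ωb
      · subst h
        constructor
        · intro m'
          rw [hσε_row]
          by_cases h1 : m' = m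
          · rw [if_pos h1]; exact le_of_lt hεpos
          · rw [if_neg h1]
            by_cases h2 : m' = fstar ω
            · rw [if_pos h2]; linarith
            · rw [if_neg h2]
        · have hsplit : ∀ m', (if m' = m then ε else if m' = fstar ω then 1 - ε else 0)
              = (if m' = m then ε else 0) + (if m' = fstar ω then 1 - ε else 0) := by
            intro m'
            by_cases h1 : m' = m
            · rw [if_pos h1, if_pos h1, if_neg (show m' ≠ fstar ω by rw [h1]; exact hmne),
                add_zero]
            · rw [if_neg h1, if_neg h1, zero_add]
          calc ∑ m', σε ω m'
              = ∑ m', ((if m' = m then ε else 0) + (if m' = fstar ω then 1 - ε else 0)) := by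
                refine Finset.sum_congr rfl fun m' _ => ?_
                rw [hσε_row m', hsplit m']
            _ = 1 := by
                rw [Finset.sum_add_distrib,
                  Finset.sum_ite_eq' Finset.univ m (fun _ => ε),
                  Finset.sum_ite_eq' Finset.univ (fstar ω) (fun _ => 1 - ε)]
                simp only [Finset.mem_univ, if_true]
                ring
      · have heq : σε ω = σstar ω := hσε_other ω h
        rw [show IsDist (σε ω) = IsDist (σstar ω) from by rw [heq]]
        exact hσstar ω
    -- receiver payoffs under σε
    have hgε : ∀ m' a, gaux μ₀ uR σε m' a
        = gaux μ₀ uR σstar m' a + μ₀ ωb * (σε ωb m' - σstar ωb m') * uR (a, ωb) := by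
      intro m' a
      have hterm : ∀ ω : Ω, μ₀ ω * σε ω m' * uR (a, ω)
          = μ₀ ω * σstar ω m' * uR (a, ω)
            + (if ω = ωb then μ₀ ωb * (σε ωb m' - σstar ωb m') * uR (a, ωb) else 0) := by
        intro ω
        by_cases h : ω = ωb
        · subst h; rw [if_pos rfl]; ring
        · rw [if_neg h, add_zero, show σε ω = σstar ω from hσε_other ω h]
      show ∑ ω, μ₀ ω * σε ω m' * uR (a, ω) = _
      rw [Finset.sum_congr rfl fun ω _ => hterm ω, Finset.sum_add_distrib,
        Finset.sum_ite_eq' Finset.univ ωb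
          (fun _ => μ₀ ωb * (σε ωb m' - σstar ωb m') * uR (a, ωb))]
      simp only [Finset.mem_univ, if_true]
      rfl
    have hdm : σε ωb m - σstar ωb m = ε := by
      rw [hσε_row m, if_pos rfl, hσ0 ωb m hmne, sub_zero]
    have hdf : σε ωb (fstar ωb) - σstar ωb (fstar ωb) = -ε := by
      rw [hσε_row, if_neg (fun hh => hmne hh.symm), if_pos rfl, hσ1 ωb]; ring
    have hd0 : ∀ m', m' ≠ m → m' ≠ fstar ωb → σε ωb m' - σstar ωb m' = 0 := by
      intro m' h1 h2
      rw [hσε_row, if_neg h1, if_neg h2, hσ0 ωb m' h2, sub_zero]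
    -- ρstar is still a best reply against σε
    have hmaxε : ∀ m' a, gaux μ₀ uR σε m' a ≤ gaux μ₀ uR σε m' (B m') := by
      intro m' a
      by_cases hcase : m' = m ∨ m' = fstar ωb
      · by_cases ha : a = B m'
        · rw [ha]
        · have hpair : (m', a) ∈ T := by
            refine Finset.mem_filter.mpr ⟨Finset.mem_product.mpr ⟨?_, Finset.mem_univ a⟩, ha⟩
            rcases hcase with h | h
            · exact Finset.mem_insert.mpr (Or.inl h)
            · exact Finset.mem_insert.mpr (Or.inr (Finset.mem_singleton.mpr h))
          have hgap : γ ≤ gaux μ₀ uR σstar m' (B m') - gaux μ₀ uR σstar m' a := hγle _ hpair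
          rw [hgε m' a, hgε m' (B m')]
          have habs : μ₀ ωb * (σε ωb m' - σstar ωb m') * uR (a, ωb)
              - μ₀ ωb * (σε ωb m' - σstar ωb m') * uR (B m', ωb) ≤ μ₀ ωb * ε := by
            have hμε : 0 ≤ μ₀ ωb * ε := mul_nonneg (le_of_lt hμω) (le_of_lt hεpos)
            rcases hcase with h | h
            · rw [h, hdm]
              nlinarith [hR1 (a, ωb), hR0 (B m, ωb)]
            · rw [h, hdf]
              nlinarith [hR1 (B (fstar ωb), ωb), hR0 (a, ωb)]
          linarith
      · push_neg at hcase
        have hd := hd0 m' hcase.1 hcase.2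
        rw [hgε m' a, hgε m' (B m'), hd]
        have h1 : μ₀ ωb * 0 * uR (a, ωb) = 0 := by ring
        have h2 : μ₀ ωb * 0 * uR (B m', ωb) = 0 := by ring
        rw [h1, h2, add_zero, add_zero]
        exact hmaxstar m' a
    have hRBRε : RBR μ₀ uR σε ρstar :=
      RBR_of_pointwise μ₀ uR σε ρstar B hρ1 hρ0 hmaxε
    -- the perturbed profile strictly improves on W
    have hUε : U μ₀ uS σε ρstar
        = W + μ₀ ωb * ε * (uS (B m, ωb) - uS (B (fstar ωb), ωb)) := by
      rw [U_rho_point μ₀ uS σε ρstar B hρ1 hρ0]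
      have hWrw : W = ∑ ω, ∑ m', μ₀ ω * σstar ω m' * uS (B m', ω) := by
        rw [hWdef]; exact U_rho_point μ₀ uS σstar ρstar B hρ1 hρ0
      rw [hWrw]
      have hrow : ∀ ω : Ω, ∑ m', μ₀ ω * σε ω m' * uS (B m', ω)
          = (∑ m', μ₀ ω * σstar ω m' * uS (B m', ω))
            + (if ω = ωb then μ₀ ωb * ε * (uS (B m, ωb) - uS (B (fstar ωb), ωb)) else 0) := by
        intro ω
        by_cases h : ω = ωb
        · subst h
          rw [if_pos rfl]
          have hL : ∑ m', μ₀ ω * σε ω m' * uS (B m', ω)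
              = μ₀ ω * (ε * uS (B m, ω) + (1 - ε) * uS (B (fstar ω), ω)) := by
            have hsummand : ∀ m', μ₀ ω * σε ω m' * uS (B m', ω)
                = (if m' = m then μ₀ ω * (ε * uS (B m, ω)) else 0)
                  + (if m' = fstar ω then μ₀ ω * ((1 - ε) * uS (B (fstar ω), ω)) else 0) := by
              intro m'
              rw [hσε_row m']
              by_cases h1 : m' = m
              · rw [if_pos h1, if_pos h1,
                  if_neg (show m' ≠ fstar ω by rw [h1]; exact hmne), add_zero, h1]
                ring
              · rw [if_neg h1, if_neg h1, zero_add]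
                by_cases h2 : m' = fstar ω
                · rw [if_pos h2, if_pos h2, h2]; ring
                · rw [if_neg h2, if_neg h2]; ring
            rw [Finset.sum_congr rfl fun m' _ => hsummand m', Finset.sum_add_distrib,
              Finset.sum_ite_eq' Finset.univ m (fun _ => μ₀ ω * (ε * uS (B m, ω))),
              Finset.sum_ite_eq' Finset.univ (fstar ω)
                (fun _ => μ₀ ω * ((1 - ε) * uS (B (fstar ω), ω)))]
            simp only [Finset.mem_univ, if_true]
            ring
          have hRr : ∑ m', μ₀ ω * σstar ω m' * uS (B m', ω)
              = μ₀ ω * uS (B (fstar ω), ω) := by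
            rw [Finset.sum_eq_single (fstar ω)]
            · rw [hσ1 ω]; ring
            · intro b _ hb; rw [hσ0 ω b hb]; ring
            · intro hh; exact absurd (Finset.mem_univ _) hh
          rw [hL, hRr]; ring
        · rw [if_neg h, add_zero]
          refine Finset.sum_congr rfl fun m' _ => ?_
          rw [show σε ω = σstar ω from hσε_other ω h]
      rw [Finset.sum_congr rfl fun ω _ => hrow ω, Finset.sum_add_distrib,
        Finset.sum_ite_eq' Finset.univ ωb
          (fun _ => μ₀ ωb * ε * (uS (B m, ωb) - uS (B (fstar ωb), ωb)))]
      simp only [Finset.mem_univ, if_true]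
    have hmemε : U μ₀ uS σε ρstar ∈ PS := ⟨σε, ρstar, ⟨hσε, hρstar, hRBRε⟩, rfl⟩
    have hleε : U μ₀ uS σε ρstar ≤ sSup PS := le_csSup hbddPS hmemε
    have hpos : 0 < μ₀ ωb * ε * (uS (B m, ωb) - uS (B (fstar ωb), ωb)) :=
      mul_pos (mul_pos hμω hεpos) (sub_pos.mpr hlt')
    have hchain : sSup PS ≤ W := by rw [hEq]; exact hPPleW
    rw [hUε] at hleε
    linarith
  -- full obedience
  have hOb : ∀ (m : M) (ω : Ω), uS (B m, ω) ≤ uS (B (fstar ω), ω) := by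
    intro m ω
    by_cases h : (cellOf fstar m).Nonempty
    · exact hOb' m h ω
    · have hBm : B m = B (fstar ω₀) := by
        have h1 : B m = act (cellOf fstar (fstar ω₀)) := if_neg h
        rw [h1, hBf ω₀]
      rw [hBm]
      exact hOb' (fstar ω₀) ⟨ω₀, hmem_cell fstar ω₀⟩ ω
  -- (σstar, ρstar) is a cheap-talk equilibrium
  have hSBR : SBR μ₀ uS σstar ρstar := by
    intro σ' hσ'
    rw [U_rho_point μ₀ uS σ' ρstar B hρ1 hρ0]
    have hgoal : U μ₀ uS σstar ρstar = ∑ ω, μ₀ ω * uS (B (fstar ω), ω) :=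
      U_point_point μ₀ uS σstar ρstar fstar B hσ1 hσ0 hρ1 hρ0
    rw [hgoal]
    calc ∑ ω, ∑ m, μ₀ ω * σ' ω m * uS (B m, ω)
        ≤ ∑ ω, ∑ m, μ₀ ω * σ' ω m * uS (B (fstar ω), ω) := by
          refine Finset.sum_le_sum fun ω _ => Finset.sum_le_sum fun m _ => ?_
          exact mul_le_mul_of_nonneg_left (hOb m ω)
            (mul_nonneg (le_of_lt (hμ.1 ω)) ((hσ' ω).1 m))
      _ = ∑ ω, μ₀ ω * uS (B (fstar ω), ω) := by
          refine Finset.sum_congr rfl fun ω _ => ?_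
          calc ∑ m, μ₀ ω * σ' ω m * uS (B (fstar ω), ω)
              = (∑ m, σ' ω m) * (μ₀ ω * uS (B (fstar ω), ω)) := by
                rw [Finset.sum_mul]
                exact Finset.sum_congr rfl fun m _ => by ring
            _ = μ₀ ω * uS (B (fstar ω), ω) := by rw [(hσ' ω).2, one_mul]
  have hCTeq : CTEq μ₀ uS uR σstar ρstar := ⟨hσstar, hρstar, hSBR, hRBRstar⟩
  have hWct : W ∈ CTS := ⟨σstar, ρstar, hCTeq, rfl⟩
  have hWpc : W ∈ PC := ⟨σstar, ρstar, hPartstar, hCTeq, rfl⟩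
  -- the contradiction chain
  have h1 : sSup CTS ≤ sSup PS := csSup_le_csSup hbddPS ⟨W, hWct⟩ hsubCT
  have h2 : W ≤ sSup PC := le_csSup (hbddPS.mono hsubPC) hWpc
  rw [hPC, hCT] at hct
  have h3 : sSup PS ≤ W := by rw [hEq]; exact hPPleW
  linarith


/-- Failure of PUR is a null event. -/
lemma null_notPUR {Ω A : Type} [Fintype Ω] [Fintype A] [Nonempty A]
    (μ₀ : Ω → ℝ) (hμ : ∀ ω, 0 < μ₀ ω) :
    volume {e : (A × Ω → ℝ) × (A × Ω → ℝ) | ¬ PUR μ₀ e.2} = 0 := by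
  classical
  haveI : (volume : Measure ((A × Ω → ℝ) × (A × Ω → ℝ))).IsAddHaarMeasure := by
    rw [show (volume : Measure ((A × Ω → ℝ) × (A × Ω → ℝ)))
        = (volume : Measure (A × Ω → ℝ)).prod volume from rfl]
    exact Measure.prod.instIsAddHaarMeasure _ _
  -- indifference hyperplanes
  let lin : Finset Ω × A × A → ((A × Ω → ℝ) × (A × Ω → ℝ)) →ₗ[ℝ] ℝ := fun p =>
    { toFun := fun e => ∑ ω ∈ p.1, μ₀ ω * (e.2 (p.2.1, ω) - e.2 (p.2.2, ω))
      map_add' := by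
        intro e₁ e₂
        rw [← Finset.sum_add_distrib]
        refine Finset.sum_congr rfl fun ω _ => ?_
        simp only [Prod.snd_add, Pi.add_apply]
        ring
      map_smul' := by
        intro c e
        simp only [RingHom.id_apply, smul_eq_mul, Finset.mul_sum]
        refine Finset.sum_congr rfl fun ω _ => ?_
        simp only [Prod.smul_snd, Pi.smul_apply, smul_eq_mul]
        ring }
  have hsub : {e : (A × Ω → ℝ) × (A × Ω → ℝ) | ¬ PUR μ₀ e.2}
      ⊆ ⋃ p : Finset Ω × A × A,
          {e : (A × Ω → ℝ) × (A × Ω → ℝ) |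
            p.1.Nonempty ∧ p.2.1 ≠ p.2.2 ∧ lin p e = 0} := by
    intro e he
    unfold PUR at he
    push_neg at he
    obtain ⟨S, hS, hne⟩ := he
    obtain ⟨a, -, ha⟩ := Finset.exists_max_image Finset.univ
      (fun a => ∑ ω ∈ S, μ₀ ω * e.2 (a, ω)) Finset.univ_nonempty
    have hPa : ∀ b, ∑ ω ∈ S, μ₀ ω * e.2 (b, ω) ≤ ∑ ω ∈ S, μ₀ ω * e.2 (a, ω) :=
      fun b => ha b (Finset.mem_univ b)
    have hnu : ¬ ∀ y, (∀ b, ∑ ω ∈ S, μ₀ ω * e.2 (b, ω) ≤ ∑ ω ∈ S, μ₀ ω * e.2 (y, ω))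
        → y = a := fun hy => hne ⟨a, hPa, hy⟩
    push_neg at hnu
    obtain ⟨b, hPb, hba⟩ := hnu
    have heq : ∑ ω ∈ S, μ₀ ω * e.2 (a, ω) = ∑ ω ∈ S, μ₀ ω * e.2 (b, ω) :=
      le_antisymm (hPb a) (hPa b)
    refine Set.mem_iUnion.mpr ⟨(S, a, b), hS, fun h => hba h.symm, ?_⟩
    show ∑ ω ∈ S, μ₀ ω * (e.2 (a, ω) - e.2 (b, ω)) = 0
    have hdist : ∑ ω ∈ S, μ₀ ω * (e.2 (a, ω) - e.2 (b, ω))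
        = (∑ ω ∈ S, μ₀ ω * e.2 (a, ω)) - ∑ ω ∈ S, μ₀ ω * e.2 (b, ω) := by
      rw [← Finset.sum_sub_distrib]
      exact Finset.sum_congr rfl fun ω _ => by ring
    rw [hdist, heq, sub_self]
  refine measure_mono_null hsub (measure_iUnion_null fun p => ?_)
  by_cases hp : p.1.Nonempty ∧ p.2.1 ≠ p.2.2
  · have hker : LinearMap.ker (lin p) ≠ ⊤ := by
      intro h0
      have hlin0 : lin p = 0 := LinearMap.ker_eq_top.mp h0
      obtain ⟨ω₁, hω₁⟩ := hp.1
      set e₀ : (A × Ω → ℝ) × (A × Ω → ℝ) :=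
        ((0 : A × Ω → ℝ), fun q => if q = (p.2.1, ω₁) then (1:ℝ) else 0) with he₀
      have hval : lin p e₀ = μ₀ ω₁ := by
        show ∑ ω ∈ p.1, μ₀ ω * ((if ((p.2.1, ω) : A × Ω) = (p.2.1, ω₁) then (1:ℝ) else 0)
            - (if ((p.2.2, ω) : A × Ω) = (p.2.1, ω₁) then (1:ℝ) else 0)) = μ₀ ω₁
        have hterm : ∀ ω ∈ p.1, μ₀ ω * ((if ((p.2.1, ω) : A × Ω) = (p.2.1, ω₁) then (1:ℝ) else 0)
            - (if ((p.2.2, ω) : A × Ω) = (p.2.1, ω₁) then (1:ℝ) else 0))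
            = if ω = ω₁ then μ₀ ω else 0 := by
          intro ω _
          have h2 : ((p.2.2, ω) : A × Ω) ≠ (p.2.1, ω₁) := by
            intro h
            exact hp.2 (congrArg Prod.fst h).symm
          rw [if_neg h2, sub_zero]
          by_cases h1 : ω = ω₁
          · rw [if_pos (by rw [h1]), if_pos h1, mul_one]
          · rw [if_neg (fun h => h1 (congrArg Prod.snd h)), if_neg h1, mul_zero]
        rw [Finset.sum_congr rfl hterm, Finset.sum_ite_eq' p.1 ω₁ (fun ω => μ₀ ω),
          if_pos hω₁]
      rw [hlin0] at hval
      simp only [LinearMap.zero_apply] at hval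
      exact absurd hval.symm (ne_of_gt (hμ ω₁))
    refine measure_mono_null (fun e he => ?_) (Measure.addHaar_submodule volume
      (LinearMap.ker (lin p)) hker)
    exact LinearMap.mem_ker.mpr he.2.2
  · have hempty : {e : (A × Ω → ℝ) × (A × Ω → ℝ) |
        p.1.Nonempty ∧ p.2.1 ≠ p.2.2 ∧ lin p e = 0} = ∅ := by
      ext e
      simp only [Set.mem_setOf_eq, Set.mem_empty_iff_false, iff_false]
      intro h
      exact hp ⟨h.1, h.2.1⟩
    rw [hempty]
    exact measure_empty

/-- Corollary (Kamenica–Lin): generically, if cheap-talk Sender values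
randomization then committed Sender values randomization. -/
theorem cheapTalk_randomization_implies_committed_randomization
    (Ω A M : Type) [Fintype Ω] [Fintype A] [Fintype M]
    [Nonempty Ω] [Nonempty A]
    (hM : max (Fintype.card Ω) (Fintype.card A) < Fintype.card M)
    (μ₀ : Ω → ℝ) (hμ : IsPrior μ₀) :
    ∃ G : Set ((A × Ω → ℝ) × (A × Ω → ℝ)),
      G ⊆ EnvCube Ω A ∧
      volume (EnvCube Ω A \ G) = 0 ∧
      ∀ e ∈ G,
        partCtPayoff (M := M) μ₀ e.1 e.2 < ctPayoff (M := M) μ₀ e.1 e.2 →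
        partPersPayoff (M := M) μ₀ e.1 e.2 < persPayoff (M := M) μ₀ e.1 e.2 := by
  classical
  haveI : Nonempty M := by
    have hpos : 0 < Fintype.card M := lt_of_le_of_lt (Nat.zero_le _) hM
    exact Fintype.card_pos_iff.mp hpos
  refine ⟨EnvCube Ω A ∩ {e | PUR μ₀ e.2}, Set.inter_subset_left, ?_, ?_⟩
  · refine measure_mono_null (fun e he => ?_) (null_notPUR μ₀ hμ.1)
    exact fun hp => he.2 ⟨he.1, hp⟩
  · rintro ⟨uS, uR⟩ ⟨hcube, hPUR⟩ hct
    exact key_PUR μ₀ hμ uS uR (fun p => (hcube.1 p).1) (fun p => (hcube.1 p).2)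
      (fun p => (hcube.2 p).1) (fun p => (hcube.2 p).2) hPUR hct

end KL
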